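/- Let H be a complex Hilbert space, let P, Q : H → H be bounded self-adjoint projections, and set T := P∘Q − Q∘P. Suppose u ∈ H, u ≠ 0, λ ∈ ℝ, λ > 0, and P(Q(P u)) = λ u. Then: (i) P u = u; (ii) λ ≤ 1; (iii) T(T u) = −λ(1−λ) u, i.e. u is an eigenvector of −[P,Q]² with eigenvalue λ(1−λ); and (iv) if λ < 1 then T u ≠ 0. -/

import Mathlib

noncomputable section

/-- for self-adjoint projections `P, Q` on a complex Hilbert space, with
`T := [P,Q]`, if `u ≠ 0`, `λ > 0` and `P Q P u = λ u`, then `P u = u`, `λ ≤ 1`,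
`T² u = −λ(1−λ) u`, and `T u ≠ 0` whenever `λ < 1`. -/
theorem statement_9 {H : Type*} [NormedAddCommGroup H] [InnerProductSpace ℂ H]
    [CompleteSpace H] (P Q : H →L[ℂ] H)
    (hP2 : P * P = P) (hPsa : IsSelfAdjoint P)
    (hQ2 : Q * Q = Q) (hQsa : IsSelfAdjoint Q)
    (u : H) (hu : u ≠ 0) (lam : ℝ) (hlam : 0 < lam)
    (heig : P (Q (P u)) = (lam : ℂ) • u) :
    P u = u ∧ lam ≤ 1 ∧
    (P * Q - Q * P) ((P * Q - Q * P) u) = ((-(lam * (1 - lam)) : ℝ) : ℂ) • u ∧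
    (lam < 1 → (P * Q - Q * P) u ≠ 0) := by
  have hPP : ∀ x, P (P x) = P x := fun x => by
    conv_rhs => rw [← hP2]
    rfl
  have hQQ : ∀ x, Q (Q x) = Q x := fun x => by
    conv_rhs => rw [← hQ2]
    rfl
  have hlamC : (lam : ℂ) ≠ 0 := by exact_mod_cast ne_of_gt hlam
  -- (i) P u = u
  have hPu : P u = u := by
    have h1 : P (P (Q (P u))) = P ((lam : ℂ) • u) := congrArg P heig
    rw [hPP, heig, map_smul] at h1
    exact ((smul_right_injective H hlamC) h1).symm
  -- key: P (Q u) = lam • u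
  have hPQu : P (Q u) = (lam : ℂ) • u := by rw [← heig, hPu]
  -- (ii) lam ≤ 1
  have hle : lam ≤ 1 := by
    have hQin : ∀ x y : H, (inner ℂ (Q x) y : ℂ) = inner ℂ x (Q y) := fun x y =>
      hQsa.isSymmetric x y
    have hPin : ∀ x y : H, (inner ℂ (P x) y : ℂ) = inner ℂ x (P y) := fun x y =>
      hPsa.isSymmetric x y
    have h1 : (inner ℂ u (Q u) : ℂ) = (lam : ℂ) * inner ℂ u u := by
      calc (inner ℂ u (Q u) : ℂ) = inner ℂ (P u) (Q u) := by rw [hPu]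
        _ = inner ℂ u (P (Q u)) := hPin u (Q u)
        _ = (lam : ℂ) * inner ℂ u u := by rw [hPQu, inner_smul_right]
    have hQuQu : (inner ℂ (Q u) (Q u) : ℂ) = inner ℂ u (Q u) := by
      rw [hQin u (Q u), hQQ]
    have h2' : ‖Q u‖ ^ 2 = lam * ‖u‖ ^ 2 := by
      have ha := inner_self_eq_norm_sq (𝕜 := ℂ) (Q u)
      have hb := inner_self_eq_norm_sq (𝕜 := ℂ) u
      rw [hQuQu, h1] at ha
      rw [← ha, ← hb]
      simp [RCLike.re_to_complex, Complex.mul_re]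
    have hcs : ‖Q u‖ ^ 2 ≤ ‖u‖ * ‖Q u‖ := by
      have h3 := norm_inner_le_norm (𝕜 := ℂ) u (Q u)
      have h4 : ‖(inner ℂ u (Q u) : ℂ)‖ = ‖Q u‖ ^ 2 := by
        rw [← hQuQu, inner_self_eq_norm_sq_to_K]
        simp [sq_abs]
      rw [h4] at h3
      exact h3
    have hupos : 0 < ‖u‖ := norm_pos_iff.mpr hu
    nlinarith [norm_nonneg (Q u), sq_nonneg (‖Q u‖ - ‖u‖), sq_nonneg ‖u‖, mul_pos hupos hupos]
  -- (iii)
  have hT2 : (P * Q - Q * P) ((P * Q - Q * P) u) = ((-(lam * (1 - lam)) : ℝ) : ℂ) • u := by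
    have hQPu : Q (P u) = Q u := by rw [hPu]
    simp only [ContinuousLinearMap.sub_apply, ContinuousLinearMap.mul_apply, map_sub,
      hQPu, map_smul, hPQu, hQQ, hPP]
    push_cast
    module
  refine ⟨hPu, hle, hT2, fun hlt hT0 => ?_⟩
  rw [hT0, map_zero] at hT2
  have hc : ((-(lam * (1 - lam)) : ℝ) : ℂ) = 0 := by
    rcases smul_eq_zero.mp hT2.symm with h | h
    · exact h
    · exact absurd h hu
  have : lam * (1 - lam) = 0 := by
    have := Complex.ofReal_eq_zero.mp hc
    linarith
  rcases mul_eq_zero.mp this with h | h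
  · exact absurd h (ne_of_gt hlam)
  · linarith
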